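/- Let Q(x,y,z)=(y,z,x) on ℝ³ with standard inner product g. If v is a unit vector with 0 < angle between v and Qv < 2π/3, then {v, Qv, Q²v} is linearly independent (a basis of ℝ³). -/

import Mathlib

def Qmap (v : Fin 3 → ℝ) : Fin 3 → ℝ := ![v 1, v 2, v 0]

def gdot (v w : Fin 3 → ℝ) : ℝ := v 0 * w 0 + v 1 * w 1 + v 2 * w 2

def fform (v w : Fin 3 → ℝ) : ℝ := gdot v (Qmap w) + gdot (Qmap v) w
theorem stmt_4 (v : Fin 3 → ℝ) (hv : gdot v v = 1) (φ : ℝ)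
    (hφ0 : 0 < φ) (hφ1 : φ < 2 * Real.pi / 3)
    (hcos : Real.cos φ = gdot v (Qmap v)) :
    LinearIndependent ℝ ![v, Qmap v, Qmap (Qmap v)] := by
  have hπ : 0 < Real.pi := Real.pi_pos
  -- cos φ < 1
  have h1 : Real.cos φ < 1 := by
    have := Real.cos_lt_cos_of_nonneg_of_le_pi le_rfl (by linarith) hφ0
    simpa using this
  -- cos φ > -1/2
  have h2 : -(1/2 : ℝ) < Real.cos φ := by
    have := Real.cos_lt_cos_of_nonneg_of_le_pi hφ0.le (by linarith : 2 * Real.pi / 3 ≤ Real.pi) hφ1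
    have heq : Real.cos (2 * Real.pi / 3) = -(1/2) := by
      have : 2 * Real.pi / 3 = Real.pi - Real.pi / 3 := by ring
      rw [this, Real.cos_pi_sub, Real.cos_pi_div_three]
    linarith [heq ▸ this]
  set a := v 0; set b := v 1; set c := v 2
  have hvv : a * a + b * b + c * c = 1 := hv
  have hab : Real.cos φ = a * b + b * c + c * a := by
    simpa [gdot, Qmap, mul_comm] using hcos
  have key : LinearIndependent ℝ (fun i => (Matrix.of ![v, Qmap v, Qmap (Qmap v)]) i) := by
    change LinearIndependent ℝ (Matrix.row (Matrix.of ![v, Qmap v, Qmap (Qmap v)]))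
    rw [Matrix.linearIndependent_rows_iff_isUnit, Matrix.isUnit_iff_isUnit_det,
      isUnit_iff_ne_zero]
    rw [Matrix.det_fin_three]
    simp only [Matrix.of_apply, Matrix.cons_val', Matrix.cons_val_zero, Matrix.cons_val_one,
      Matrix.head_cons, Matrix.empty_val', Matrix.cons_val_fin_one, Matrix.head_fin_const,
      Matrix.cons_val_two, Matrix.tail_cons, Qmap]
    intro hdet
    nlinarith [sq_nonneg (a + b + c), sq_nonneg (a - b), sq_nonneg (b - c), sq_nonneg (c - a),
      sq_nonneg (a + b + c - 1), sq_nonneg (a + b + c + 1)]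
  exact key
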